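/- Fix y ∈ 𝒴 and a symmetric proposal structure q on 𝒩(y). For y' ∈ 𝒩(y), define g_{y'} : ℝ → ℝ by g_{y'}(x) = t·q(y',y)·exp((x+φ(y')−φ(y))/t) if x ≤ x₀ and g_{y'}(x) = t·q(y,y')·((x+φ(y')−φ(y))/t + 1 − log(q(y,y')/q(y',y))) if x > x₀, where x₀ = t·log(q(y,y')/q(y',y)) + φ(y) − φ(y'). Then g_{y'} is convex, continuously differentiable, and (q(y,y')/t)-smooth (its derivative is Lipschitz with constant q(y,y')/t). -/

import Mathlib

/-- Key Lipschitz-type inequality for `x ↦ min (b * exp ((x+c)/t)) a`. -/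
lemma one_step_scalar_key {t a b c : ℝ} (ht : 0 < t) (ha : 0 < a) (hb : 0 < b)
    {x₁ x₂ : ℝ} (h : x₂ ≤ x₁) :
    min (b * Real.exp ((x₁ + c) / t)) a - min (b * Real.exp ((x₂ + c) / t)) a
      ≤ a / t * (x₁ - x₂) := by
  have ht' : t ≠ 0 := ne_of_gt ht
  set u : ℝ := (x₂ - x₁) / t with hu
  have hu0 : u ≤ 0 := div_nonpos_of_nonpos_of_nonneg (by linarith) ht.le
  have hexp : Real.exp ((x₂ + c) / t) = Real.exp ((x₁ + c) / t) * Real.exp u := by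
    rw [← Real.exp_add]
    congr 1
    rw [hu, ← add_div]
    congr 1
    ring
  set m₁ : ℝ := min (b * Real.exp ((x₁ + c) / t)) a with hm₁
  have hm₁pos : 0 < m₁ := lt_min (by positivity) ha
  have hm₁a : m₁ ≤ a := min_le_right _ _
  have h1 : m₁ * Real.exp u ≤ min (b * Real.exp ((x₂ + c) / t)) a := by
    refine le_min ?_ ?_
    · rw [hexp, ← mul_assoc]
      exact mul_le_mul_of_nonneg_right (min_le_left _ _) (Real.exp_pos u).le
    · calc m₁ * Real.exp u ≤ m₁ * 1 :=
            mul_le_mul_of_nonneg_left (Real.exp_le_one_iff.2 hu0) hm₁pos.le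
      _ ≤ a := by simpa using hm₁a
  have h2 : u + 1 ≤ Real.exp u := Real.add_one_le_exp u
  have h3 : m₁ - min (b * Real.exp ((x₂ + c) / t)) a ≤ m₁ * (1 - Real.exp u) := by
    linarith
  have h4 : m₁ * (1 - Real.exp u) ≤ a * (-u) := by
    nlinarith [hm₁pos.le, hm₁a]
  have h5 : a * (-u) = a / t * (x₁ - x₂) := by
    rw [hu]; field_simp; ring
  linarith

/-- The piecewise scalar function `g` used to build the one-step Fenchel–Young
potential is convex, continuously differentiable, and `(a/t)`-smooth. -/
theorem one_step_scalar_convex_smooth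
    (t a b φy φy' : ℝ) (ht : 0 < t) (ha : 0 < a) (hb : 0 < b)
    (x₀ : ℝ) (hx₀ : x₀ = t * Real.log (a / b) + φy - φy')
    (g : ℝ → ℝ)
    (hg : ∀ x, g x =
      if x ≤ x₀ then t * b * Real.exp ((x + φy' - φy) / t)
      else t * a * ((x + φy' - φy) / t + 1 - Real.log (a / b))) :
    ConvexOn ℝ Set.univ g ∧
    ∃ g' : ℝ → ℝ, Continuous g' ∧ (∀ x, HasDerivAt g (g' x) x) ∧
      ∀ x₁ x₂, |g' x₁ - g' x₂| ≤ (a / t) * |x₁ - x₂| := by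
  have ht' : t ≠ 0 := ne_of_gt ht
  have hab : (0:ℝ) < a / b := div_pos ha hb
  set c : ℝ := φy' - φy with hc
  have harg : ∀ x : ℝ, x + φy' - φy = x + c := fun x => by rw [hc]; ring
  -- key value at x₀
  have hx₀c : (x₀ + c) / t = Real.log (a / b) := by
    rw [hx₀, hc]; field_simp; ring
  have hx₀exp : Real.exp ((x₀ + c) / t) = a / b := by
    rw [hx₀c, Real.exp_log hab]
  -- the candidate derivative
  set G : ℝ → ℝ := fun x => min (b * Real.exp ((x + c) / t)) a with hG
  have hGle : ∀ x, x ≤ x₀ → G x = b * Real.exp ((x + c) / t) := by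
    intro x hx
    refine min_eq_left ?_
    have : Real.exp ((x + c) / t) ≤ Real.exp ((x₀ + c) / t) :=
      Real.exp_le_exp.2 (div_le_div_of_nonneg_right (by linarith) ht.le)
    rw [hx₀exp] at this
    calc b * Real.exp ((x + c) / t) ≤ b * (a / b) :=
          mul_le_mul_of_nonneg_left this hb.le
      _ = a := by field_simp
  have hGge : ∀ x, x₀ ≤ x → G x = a := by
    intro x hx
    refine min_eq_right ?_
    have : Real.exp ((x₀ + c) / t) ≤ Real.exp ((x + c) / t) :=
      Real.exp_le_exp.2 (div_le_div_of_nonneg_right (by linarith) ht.le)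
    rw [hx₀exp] at this
    calc a = b * (a / b) := by field_simp
      _ ≤ b * Real.exp ((x + c) / t) := mul_le_mul_of_nonneg_left this hb.le
  -- auxiliary exact branch functions with derivatives
  have hE : ∀ x : ℝ, HasDerivAt (fun x => t * b * Real.exp ((x + c) / t))
      (b * Real.exp ((x + c) / t)) x := by
    intro x
    have h1 : HasDerivAt (fun x : ℝ => (x + c) / t) (1 / t) x := by
      simpa using ((hasDerivAt_id x).add_const c).div_const t
    have h2 := (Real.hasDerivAt_exp ((x + c) / t)).comp x h1
    have h3 := h2.const_mul (t * b)
    refine h3.congr_deriv ?_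
    field_simp
  have hL : ∀ x : ℝ, HasDerivAt
      (fun x => t * a * ((x + c) / t + 1 - Real.log (a / b))) a x := by
    intro x
    have h1 : HasDerivAt (fun x : ℝ => (x + c) / t) (1 / t) x := by
      simpa using ((hasDerivAt_id x).add_const c).div_const t
    have h2 : HasDerivAt (fun x : ℝ => (x + c) / t + 1 - Real.log (a / b)) (1 / t) x := by
      simpa using (h1.add_const 1).sub_const (Real.log (a / b))
    have h3 := h2.const_mul (t * a)
    refine h3.congr_deriv ?_
    field_simp
  -- rewrite g on each region
  have hgE : Set.EqOn g (fun x => t * b * Real.exp ((x + c) / t)) (Set.Iic x₀) := by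
    intro x hx
    simp only [Set.mem_Iic] at hx
    rw [hg x, if_pos hx, harg x]
  have hgL : Set.EqOn g (fun x => t * a * ((x + c) / t + 1 - Real.log (a / b)))
      (Set.Ici x₀) := by
    intro x hx
    simp only [Set.mem_Ici] at hx
    rw [hg x]
    split_ifs with hle
    · have hxx : x = x₀ := le_antisymm hle hx
      subst hxx
      have hxc : x + c = Real.log (a / b) * t := (div_eq_iff ht').mp hx₀c
      rw [harg x, hx₀c, Real.exp_log hab]
      field_simp
      rw [hxc]
      ring
    · rw [harg x]
  -- g has derivative G everywhere
  have hderiv : ∀ x, HasDerivAt g (G x) x := by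
    intro x
    rcases lt_trichotomy x x₀ with h | h | h
    · have hmem : Set.Iic x₀ ∈ nhds x := Iic_mem_nhds h
      have := (hE x).congr_of_eventuallyEq
        (Filter.eventuallyEq_of_mem hmem fun y hy => hgE hy)
      rwa [hGle x h.le]
    · subst h
      have h1 : HasDerivWithinAt g (G x) (Set.Iic x) x := by
        rw [hGle x le_rfl]
        exact ((hE x).hasDerivWithinAt).congr hgE (hgE (Set.mem_Iic.2 le_rfl))
      have h2 : HasDerivWithinAt g (G x) (Set.Ici x) x := by
        rw [hGge x le_rfl]
        exact ((hL x).hasDerivWithinAt).congr hgL (hgL (Set.mem_Ici.2 le_rfl))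
      have h3 := h1.union h2
      rw [Set.Iic_union_Ici] at h3
      exact h3.hasDerivAt Filter.univ_mem
    · have hmem : Set.Ici x₀ ∈ nhds x := Ici_mem_nhds h
      have := (hL x).congr_of_eventuallyEq
        (Filter.eventuallyEq_of_mem hmem fun y hy => hgL hy)
      rwa [hGge x h.le]
  -- G is continuous
  have hGcont : Continuous G := by
    apply Continuous.min _ continuous_const
    exact continuous_const.mul (Real.continuous_exp.comp
      ((continuous_id.add continuous_const).div_const t))
  -- G is monotone
  have hGmono : Monotone G := by
    intro x y hxy
    exact min_le_min (mul_le_mul_of_nonneg_left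
      (Real.exp_le_exp.2 (div_le_div_of_nonneg_right (by linarith) ht.le)) hb.le) le_rfl
  -- Lipschitz bound
  have hLip : ∀ x₁ x₂, |G x₁ - G x₂| ≤ (a / t) * |x₁ - x₂| := by
    intro x₁ x₂
    rcases le_total x₂ x₁ with h | h
    · rw [abs_of_nonneg (by linarith [hGmono h]), abs_of_nonneg (by linarith)]
      exact one_step_scalar_key (c := c) ht ha hb h
    · rw [abs_of_nonpos (by linarith [hGmono h]), abs_of_nonpos (by linarith)]
      have := one_step_scalar_key (c := c) ht ha hb h
      simp only [hG] at this ⊢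
      linarith
  refine ⟨?_, G, hGcont, hderiv, hLip⟩
  -- convexity
  have hdiff : Differentiable ℝ g := fun x => (hderiv x).differentiableAt
  have hderiv' : deriv g = G := funext fun x => (hderiv x).deriv
  exact Monotone.convexOn_univ_of_deriv hdiff (hderiv' ▸ hGmono)
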